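/- arXiv:1801.05334 — 2 statements merged into one kernel-verified Lean document; each statement's English description precedes it below -/
import Mathlib

section
/- Let w be a finite word with least period p, and suppose w also has a period q with p < q ≤ |w| such that the length-q prefix z of w is primitive. If |w| ≥ p + q, then a contradiction follows; hence |w| < p + q, i.e., the exponent |w|/q is less than 1 + p/q < 2. -/
/-- `p` is a period of the finite word `w`. -/
def hasPeriod {α : Type*} (w : List α) (p : ℕ) : Prop :=
  0 < p ∧ ∀ i : ℕ, i + p < w.length → w[i]? = w[i + p]?

/-- A finite word is primitive if it is not a power `u^k` with `k ≥ 2`. -/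
def Primitive {α : Type*} (z : List α) : Prop :=
  z ≠ [] ∧ ∀ (u : List α) (k : ℕ), 2 ≤ k → z ≠ (List.replicate k u).flatten

/-- If `w` has periods `p < q` and `|w| ≥ p + q`, it has period `q - p`. -/
lemma hasPeriod_sub {α : Type*} (w : List α) (p q : ℕ)
    (hp : hasPeriod w p) (hq : hasPeriod w q) (hpq : p < q) (hlen : p + q ≤ w.length) :
    hasPeriod w (q - p) := by
  refine ⟨Nat.sub_pos_of_lt hpq, fun i hi => ?_⟩
  have hp0 := hp.1
  rcases lt_or_ge (i + q) w.length with h | h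
  · have h1 := hq.2 i h
    have h2 := hp.2 (i + (q - p)) (by omega)
    rw [h1, h2]
    congr 1
    omega
  · have hip : p ≤ i := by omega
    have h1 := hp.2 (i - p) (by omega)
    have h2 := hq.2 (i - p) (by omega)
    rw [show i = i - p + p by omega]
    rw [← h1, h2]
    congr 1
    omega

/-- Fine–Wilf style divisibility: if `p` is the least period, `q ≥ p` a period,
and `|w| ≥ p + q`, then `p ∣ q`. -/
lemma least_period_dvd {α : Type*} (w : List α) (p : ℕ)
    (hleast : ∀ r : ℕ, hasPeriod w r → p ≤ r) :
    ∀ q : ℕ, hasPeriod w p → hasPeriod w q → p ≤ q → p + q ≤ w.length → p ∣ q := by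
  intro q
  induction q using Nat.strong_induction_on with
  | _ q ih =>
    intro hp hq hpq hlen
    have hp0 := hp.1
    rcases eq_or_lt_of_le hpq with he | hlt
    · exact he ▸ dvd_refl p
    · have hsub := hasPeriod_sub w p q hp hq hlt hlen
      have hple : p ≤ q - p := hleast _ hsub
      have hdvd : p ∣ (q - p) := ih (q - p) (by omega) hp hsub hple (by omega)
      obtain ⟨m, hm⟩ := hdvd
      exact ⟨m + 1, by rw [Nat.mul_add, Nat.mul_one]; omega⟩

/-- With period `p`, entries are determined by index mod `p`. -/
lemma get?_mod {α : Type*} (w : List α) (p : ℕ) (hp : hasPeriod w p) :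
    ∀ i : ℕ, i < w.length → w[i]? = w[i % p]? := by
  intro i
  induction i using Nat.strong_induction_on with
  | _ i ih =>
    intro hi
    rcases lt_or_ge i p with h | h
    · rw [Nat.mod_eq_of_lt h]
    · have hp0 := hp.1
      have h1 := hp.2 (i - p) (by omega)
      have h2 := ih (i - p) (by omega) (by omega)
      rw [show i = i - p + p by omega, ← h1, h2, Nat.add_mod_right]

lemma length_flatten_replicate {α : Type*} (k : ℕ) (u : List α) :
    (List.replicate k u).flatten.length = k * u.length := by
  induction k with
  | zero => simp
  | succ n ih => simp [List.replicate_succ, ih, Nat.succ_mul]; ring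

lemma get?_flatten_replicate {α : Type*} (u : List α) (hu : u ≠ []) :
    ∀ (k i : ℕ), i < k * u.length →
      (List.replicate k u).flatten[i]? = u[i % u.length]? := by
  have hl : 0 < u.length := List.length_pos_iff.mpr hu
  intro k
  induction k with
  | zero => intro i hi; omega
  | succ n ih =>
    intro i hi
    rw [List.replicate_succ, List.flatten_cons]
    rcases lt_or_ge i u.length with h | h
    · rw [List.getElem?_append_left h, Nat.mod_eq_of_lt h]
    · have hi' : i - u.length < n * u.length := by
        have h2 : (n + 1) * u.length = n * u.length + u.length := by ring
        omega
      rw [List.getElem?_append_right h, ih (i - u.length) hi',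
        ← Nat.mod_eq_sub_mod h]

theorem exponent_lt_two_of_primitive_nonminimal_period {α : Type*} (w : List α) (p q : ℕ)
    (hp : hasPeriod w p) (hleast : ∀ r : ℕ, hasPeriod w r → p ≤ r)
    (hq : hasPeriod w q) (hpq : p < q) (hql : q ≤ w.length)
    (hprim : Primitive (w.take q)) :
    w.length < p + q := by
  by_contra hlen
  push_neg at hlen
  have hp0 := hp.1
  obtain ⟨k, hk⟩ := least_period_dvd w p hleast q hp hq hpq.le hlen
  have hq' : q = k * p := by rw [hk, Nat.mul_comm]
  have hk2 : 2 ≤ k := by nlinarith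
  set u := w.take p with hu
  have hul : u.length = p := by simp [hu]; omega
  have hune : u ≠ [] := by
    intro h; rw [h] at hul; simp at hul; omega
  refine hprim.2 u k hk2 ?_
  apply List.ext_getElem?
  intro i
  rcases lt_or_ge i q with h | h
  · rw [List.getElem?_take_of_lt h, get?_mod w p hp i (by omega),
      get?_flatten_replicate u hune k i (by rw [hul]; omega), hul,
      List.getElem?_take_of_lt (Nat.mod_lt _ hp0)]
  · rw [List.getElem?_eq_none, List.getElem?_eq_none]
    · rw [length_flatten_replicate, hul]; omega
    · simp; omega
end

section
/- The word x_4 over {0,1,2,3}, obtained from the Fibonacci word by replacing the n-th occurrence of 0 by the n-th letter of (01)^ω and the n-th occurrence of 1 by the n-th letter of (23)^ω, has critical exponent 1 + φ/2, where φ = (1+√5)/2. -/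
/-- The finite word `u` occurs in the infinite word `x` at position `i`. -/
def OccursAt (u : List ℕ) (x : ℕ → ℕ) (i : ℕ) : Prop :=
  u = (List.range u.length).map fun j => x (i + j)

/-- `u` is a factor of the infinite word `x`. -/
def IsFactorI (u : List ℕ) (x : ℕ → ℕ) : Prop :=
  ∃ i : ℕ, OccursAt u x i

/-- The finite Fibonacci words: `f 0 = 0`, `f 1 = 01`, `f (n+2) = f (n+1) f n`. -/
def fibList : ℕ → List ℕ
  | 0 => [0]
  | 1 => [0, 1]
  | (n+2) => fibList (n+1) ++ fibList n

/-- The infinite Fibonacci word (fixed point of `0 ↦ 01`, `1 ↦ 0`). -/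
def fibWord (n : ℕ) : ℕ := (fibList (n+2)).getD n 0

/-- Number of occurrences of the letter `a` among `x 0, ..., x (n-1)`. -/
def countBelow (x : ℕ → ℕ) (a n : ℕ) : ℕ :=
  ((Finset.range n).filter fun j => x j = a).card

/-- The set of exponents of nonempty factors of the infinite word `x`. -/
def expSet (x : ℕ → ℕ) : Set ℝ :=
  {e | ∃ (u : List ℕ) (p : ℕ), IsFactorI u x ∧ u ≠ [] ∧ hasPeriod u p ∧
        e = (u.length : ℝ) / p}

/-- The word `x₄`: replace the `n`-th occurrence of `0` in the Fibonacci word by the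
`n`-th letter of `(01)^ω` and the `n`-th occurrence of `1` by the `n`-th letter of
`(23)^ω`. -/
def x4 (n : ℕ) : ℕ :=
  if fibWord n = 0 then countBelow fibWord 0 n % 2
  else 2 + countBelow fibWord 1 n % 2


open Real

open Real

noncomputable def om : ℝ := (Real.sqrt 5 - 1) / 2
noncomputable def alph : ℝ := (3 - Real.sqrt 5) / 2

lemma sqrt5_sq : Real.sqrt 5 ^ 2 = 5 := Real.sq_sqrt (by norm_num)

lemma sqrt5_gt : (2.2360679 : ℝ) < Real.sqrt 5 := by
  nlinarith [sqrt5_sq, Real.sqrt_nonneg 5]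

lemma sqrt5_lt : Real.sqrt 5 < 2.2360680 := by
  nlinarith [sqrt5_sq, Real.sqrt_nonneg 5]

lemma om_pos : 0 < om := by unfold om; nlinarith [sqrt5_gt]
lemma om_lt_one : om < 1 := by unfold om; nlinarith [sqrt5_lt]
lemma om_sq : om ^ 2 = 1 - om := by unfold om; nlinarith [sqrt5_sq]
lemma alph_eq : alph = om ^ 2 := by unfold alph; rw [om_sq]; unfold om; ring
lemma alph_pos : 0 < alph := by rw [alph_eq]; exact pow_pos om_pos 2
lemma alph_lt : alph < 1 := by rw [alph_eq, om_sq]; nlinarith [om_pos]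

lemma om_pow_pos (k : ℕ) : 0 < om ^ k := pow_pos om_pos k
lemma om_pow_le_one (k : ℕ) : om ^ k ≤ 1 := pow_le_one₀ om_pos.le om_lt_one.le
lemma om_pow_succ_lt (k : ℕ) : om ^ (k+1) < om ^ k := by
  have h := om_pow_pos k
  calc om ^ (k+1) = om ^ k * om := by ring
  _ < om ^ k * 1 := by nlinarith [om_lt_one]
  _ = om ^ k := by ring
lemma om_pow_mono {a b : ℕ} (h : a ≤ b) : om ^ b ≤ om ^ a :=
  pow_le_pow_of_le_one om_pos.le om_lt_one.le h

lemma om_pow_half {j : ℕ} (h : 2 ≤ j) : om ^ j ≤ 1/2 := by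
  have h1 : om ^ j ≤ om ^ 2 := om_pow_mono h
  rw [om_sq] at h1
  unfold om at *
  nlinarith [sqrt5_gt]

lemma abs_add_lower (a b : ℝ) : |a| - |b| ≤ |a + b| := by
  have := abs_sub_abs_le_abs_sub a (-b)
  simp only [sub_neg_eq_add, abs_neg] at this
  exact this

/-- Binet-type identity. -/
lemma fib_alph (k : ℕ) :
    (Nat.fib k : ℝ) * alph = 2 * Nat.fib k - Nat.fib (k+1) + (-om) ^ k := by
  induction k using Nat.twoStepInduction with
  | zero => simp
  | one =>
      simp [Nat.fib_one, Nat.fib_add_two]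
      unfold alph om; ring_nf
  | more k ih2 ih1 =>
      have hf : (Nat.fib (k+2) : ℝ) = Nat.fib k + Nat.fib (k+1) := by
        rw [Nat.fib_add_two]; push_cast; ring
      have hf3 : (Nat.fib (k+2+1) : ℝ) = Nat.fib (k+1) + Nat.fib (k+1+1) := by
        rw [show k+2+1 = (k+1)+2 from rfl, Nat.fib_add_two]; push_cast; ring
      have hom : (-om) ^ (k+2) = (-om) ^ k + (-om) ^ (k+1) := by
        have h2 : (-om)^(k+2) = (-om)^k * om^2 := by ring
        rw [h2, om_sq]; ring
      rw [hf, hom, hf3]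
      linear_combination ih1 + ih2

lemma abs_neg_om_pow (k : ℕ) : |(-om) ^ k| = om ^ k := by
  rw [abs_pow, abs_neg, abs_of_pos om_pos]

/-- Best-approximation lower bound. -/
lemma approx : ∀ j : ℕ, ∀ m : ℕ, ∀ z : ℤ, 1 ≤ m → m < Nat.fib (j+1) →
    om ^ j ≤ |(m:ℝ) * alph - z| := by
  intro j
  induction j using Nat.strong_induction_on with
  | _ j ih =>
    intro m z hm1 hm2
    match j, ih with
    | 0, _ => simp [Nat.fib_one] at hm2; omega
    | 1, _ => simp [Nat.fib_two] at hm2; omega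
    | (j+2), ih =>
      rcases lt_or_ge m (Nat.fib (j+2)) with h | h
      · calc om ^ (j+2) ≤ om ^ (j+1) := (om_pow_succ_lt _).le
        _ ≤ |(m:ℝ) * alph - z| := ih (j+1) (by omega) m z hm1 h
      · have hm2' : m < Nat.fib (j+3) := by rw [show j+3 = j+2+1 from rfl]; exact hm2
        have hfib3 : Nat.fib (j+3) = Nat.fib (j+1) + Nat.fib (j+2) :=
          (by rw [show j+3 = (j+1)+2 from rfl, Nat.fib_add_two])
        set m' : ℕ := m - Nat.fib (j+2) with hm'
        have hmeq : m = Nat.fib (j+2) + m' := by omega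
        have hm'lt : m' < Nat.fib (j+1) := by omega
        have hfa := fib_alph (j+2)
        rw [show j+2+1 = j+3 from rfl] at hfa
        set z' : ℤ := z - (2 * (Nat.fib (j+2):ℤ) - (Nat.fib (j+3):ℤ)) with hz'
        have key : (m:ℝ) * alph - z = ((m':ℝ) * alph - z') + (-om)^(j+2) := by
          rw [hz']
          push_cast [hmeq]
          linear_combination hfa
        rcases Nat.eq_zero_or_pos m' with h0 | h0
        · -- m = fib (j+2)
          rw [key, h0]
          simp only [Nat.cast_zero, zero_mul, zero_sub]
          rcases eq_or_ne z' 0 with hT0 | hT0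
          · rw [hT0]
            simp only [Int.cast_zero, neg_zero, zero_add]
            rw [abs_neg_om_pow]
          · have h1 : (1:ℝ) ≤ |(z':ℝ)| := by
              have h4 : (1:ℤ) ≤ |z'| := Int.one_le_abs hT0
              have h5 : ((|z'|:ℤ):ℝ) = |(z':ℝ)| := Int.cast_abs
              calc (1:ℝ) = ((1:ℤ):ℝ) := by norm_num
              _ ≤ ((|z'|:ℤ):ℝ) := by exact_mod_cast h4
              _ = |(z':ℝ)| := h5
            have h3 : om^(j+2) ≤ 1/2 := om_pow_half (by omega)
            have h6 := abs_add_lower (-(z':ℝ)) ((-om)^(j+2))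
            rw [abs_neg, abs_neg_om_pow] at h6
            calc om ^ (j+2) ≤ 1 - om^(j+2) := by linarith
            _ ≤ |(z':ℝ)| - om^(j+2) := by linarith
            _ ≤ |-(z':ℝ) + (-om)^(j+2)| := h6
        · have ih' : om ^ j ≤ |(m':ℝ) * alph - z'| := ih j (by omega) m' z' h0 hm'lt
          have h6 := abs_add_lower ((m':ℝ) * alph - z') ((-om)^(j+2))
          rw [abs_neg_om_pow] at h6
          have hstep : om^j - om^(j+2) = om^(j+1) := by
            have h7 : om^(j+2) = om^j * om^2 := by ring
            rw [h7, om_sq]; ring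
          rw [key]
          calc om^(j+2) ≤ om^(j+1) := (om_pow_succ_lt _).le
          _ = om^j - om^(j+2) := hstep.symm
          _ ≤ |(m':ℝ) * alph - z'| - om^(j+2) := by linarith
          _ ≤ |((m':ℝ) * alph - z') + (-om)^(j+2)| := h6

lemma om_gap (k : ℕ) : om ^ k - om ^ (k+2) = om ^ (k+1) := by
  have h : om^(k+2) = om^k * om^2 := by ring
  rw [h, om_sq]; ring

lemma fract_of_eq (x w : ℝ) (z : ℤ) (h : x = w + z) (h0 : 0 ≤ w) (h1 : w < 1) :
    Int.fract x = w := by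
  rw [h, Int.fract_add_intCast, Int.fract_eq_self.mpr ⟨h0, h1⟩]

lemma fract_bounds {j : ℕ} {k : ℕ} (h1 : 1 ≤ k) (h2 : k < Nat.fib (j+1)) :
    om ^ j ≤ Int.fract ((k:ℝ) * alph) ∧ Int.fract ((k:ℝ) * alph) ≤ 1 - om ^ j := by
  have hfl := Int.fract_nonneg ((k:ℝ) * alph)
  have hfu := Int.fract_lt_one ((k:ℝ) * alph)
  have ha := approx j k ⌊(k:ℝ) * alph⌋ h1 h2
  have hb := approx j k (⌊(k:ℝ) * alph⌋ + 1) h1 h2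
  have he : (k:ℝ) * alph - ⌊(k:ℝ) * alph⌋ = Int.fract ((k:ℝ)*alph) := rfl
  constructor
  · rw [he] at ha
    rwa [abs_of_nonneg hfl] at ha
  · have he2 : (k:ℝ) * alph - (⌊(k:ℝ) * alph⌋ + 1 : ℤ) = Int.fract ((k:ℝ)*alph) - 1 := by
      push_cast; rw [← he]; ring
    rw [he2, abs_of_nonpos (by linarith)] at hb
    linarith

/-- The covering lemma: the points `d·α mod 1`, `d < fib (k+2)`, are `om^k`-dense
    (approaching from above), with extra structural info. -/
lemma om_gap1 (k : ℕ) : om ^ k - om ^ (k+1) = om ^ (k+2) := by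
  have h : om^(k+2) = om^k * om^2 := by ring
  rw [h, om_sq]; ring

lemma cover : ∀ (k : ℕ) (y : ℝ), ∃ (d : ℕ) (z : ℤ), d < Nat.fib (k+2) ∧
    0 ≤ y + z - d * alph ∧ y + z - d * alph < om ^ k ∧
    (Even k → om ^ (k+1) ≤ y + z - d * alph → d < Nat.fib (k+1)) := by
  intro k
  induction k with
  | zero =>
      intro y
      have h0 : 0 ≤ y - (⌊y⌋:ℝ) := Int.fract_nonneg y
      have h1 : y - (⌊y⌋:ℝ) < 1 := Int.fract_lt_one y
      refine ⟨0, -⌊y⌋, by norm_num, ?_, ?_, ?_⟩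
      · push_cast; linarith
      · push_cast; linarith
      · intro _ _; exact Nat.fib_pos.mpr (by norm_num)
  | succ k ih =>
      intro y
      obtain ⟨d, z, hd, ht0, ht1, hcl⟩ := ih y
      have hfib3 : Nat.fib (k+3) = Nat.fib (k+1) + Nat.fib (k+2) := by
        rw [show k+3 = (k+1)+2 from rfl, Nat.fib_add_two]
      by_cases hlt : y + z - d * alph < om ^ (k+1)
      · exact ⟨d, z, lt_of_lt_of_le hd (Nat.fib_le_fib_succ), ht0, hlt,
          fun _ _ => lt_of_lt_of_le hd (le_refl _)⟩
      · push_neg at hlt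
        rcases Nat.even_or_odd k with hk | hk
        · -- k even : big defect, use structural clause
          have hdk : d < Nat.fib (k+1) := hcl hk hlt
          have harr : y + ((z + (2 * (Nat.fib (k+2) : ℤ) - (Nat.fib (k+3) : ℤ))) : ℤ)
              - ((d + Nat.fib (k+2) : ℕ) : ℝ) * alph
              = (y + z - d * alph) - (-om) ^ (k+2) := by
            push_cast
            have hfa := fib_alph (k+2)
            rw [show k+2+1 = k+3 from rfl] at hfa
            linear_combination -hfa
          have hev : (-om) ^ (k+2) = om ^ (k+2) := by
            have hpar : Even (k+2) := (Nat.even_add (m := k) (n := 2)).mpr (by simp [hk])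
            exact hpar.neg_pow om
          rw [hev] at harr
          refine ⟨d + Nat.fib (k+2), z + (2 * (Nat.fib (k+2) : ℤ) - (Nat.fib (k+3) : ℤ)),
            ?_, ?_, ?_, ?_⟩
          · show d + Nat.fib (k+2) < Nat.fib (k+3)
            omega
          · rw [harr]; linarith [om_pow_succ_lt (k+1)]
          · rw [harr]; linarith [om_gap k]
          · intro hpar _
            exact absurd hk (Nat.even_add_one.mp hpar)
        · -- k odd : step fib (k+1)
          have harr : y + ((z + (2 * (Nat.fib (k+1) : ℤ) - (Nat.fib (k+2) : ℤ))) : ℤ)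
              - ((d + Nat.fib (k+1) : ℕ) : ℝ) * alph
              = (y + z - d * alph) - (-om) ^ (k+1) := by
            push_cast
            have hfa := fib_alph (k+1)
            rw [show k+1+1 = k+2 from rfl] at hfa
            linear_combination -hfa
          have hev : (-om) ^ (k+1) = om ^ (k+1) := by
            have hpar : Even (k+1) := Nat.even_add_one.mpr (Nat.not_even_iff_odd.mpr hk)
            exact hpar.neg_pow om
          rw [hev] at harr
          refine ⟨d + Nat.fib (k+1), z + (2 * (Nat.fib (k+1) : ℤ) - (Nat.fib (k+2) : ℤ)),
            ?_, ?_, ?_, ?_⟩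
          · show d + Nat.fib (k+1) < Nat.fib (k+3)
            omega
          · rw [harr]; linarith
          · rw [harr]; linarith [om_gap1 k, om_pow_succ_lt (k+1)]
          · intro _ hbig
            exfalso
            rw [harr] at hbig
            linarith [om_gap1 k, om_pow_succ_lt (k+1)]

/-- Hit lemma, top interval: in any window of `fib (k+2)` consecutive integers there is
`n` with `fract (n α) + ξ ≥ 1`, provided `ξ > om^k`. -/
lemma hit_top (k N : ℕ) (ξ : ℝ) (hξ : om ^ k < ξ) (hξ2 : ξ < 1) :
    ∃ d : ℕ, d < Nat.fib (k+2) ∧ 1 ≤ Int.fract (((N+d : ℕ) : ℝ) * alph) + ξ := by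
  set δ : ℝ := (ξ - om ^ k) / 2 with hδ
  have hδ0 : 0 < δ := by rw [hδ]; linarith
  obtain ⟨d, z, hd, ht0, ht1, _⟩ := cover k ((1 - δ) - N * alph)
  set t : ℝ := (1 - δ) - N * alph + z - d * alph with ht
  refine ⟨d, hd, ?_⟩
  have hw : Int.fract (((N+d : ℕ) : ℝ) * alph) = 1 - δ - t := by
    apply fract_of_eq _ _ z
    · push_cast; rw [ht]; ring
    · have : t < om ^ k := ht1
      have hok : om ^ k ≤ 1 := om_pow_le_one k
      linarith
    · linarith
  rw [hw]
  have : t < om ^ k := ht1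
  linarith

/-- Hit lemma, bottom interval. -/
lemma hit_bot (k N : ℕ) (ξ : ℝ) (hξ : om ^ k < ξ) (hξ2 : ξ < 1) :
    ∃ d : ℕ, d < Nat.fib (k+2) ∧ Int.fract (((N+d : ℕ) : ℝ) * alph) < ξ := by
  set δ : ℝ := (ξ - om ^ k) / 2 with hδ
  have hδ0 : 0 < δ := by rw [hδ]; linarith
  obtain ⟨d, z, hd, ht0, ht1, _⟩ := cover k ((ξ - δ) - N * alph)
  set t : ℝ := (ξ - δ) - N * alph + z - d * alph with ht
  refine ⟨d, hd, ?_⟩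
  have hw : Int.fract (((N+d : ℕ) : ℝ) * alph) = ξ - δ - t := by
    apply fract_of_eq _ _ z
    · push_cast; rw [ht]; ring
    · have : t < om ^ k := ht1
      rw [hδ]; linarith
    · have : (0:ℝ) ≤ t := ht0
      linarith
  rw [hw]
  linarith [ht0]

/-! ### fibList and fibWord basics -/

def fibListX : ℕ → List ℕ
  | 0 => [0]
  | 1 => [0, 1]
  | (n+2) => fibListX (n+1) ++ fibListX n

lemma fibListX_length : ∀ n, (fibListX n).length = Nat.fib (n+2)
  | 0 => rfl
  | 1 => rfl
  | (n+2) => by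
      rw [show fibListX (n+2) = fibListX (n+1) ++ fibListX n from rfl]
      rw [List.length_append, fibListX_length (n+1), fibListX_length n]
      rw [show n+1+2 = n+3 from rfl]
      have h := Nat.fib_add_two (n := n+2)
      rw [show n+2+1 = n+3 from rfl] at h
      omega

lemma fibListX_prefix : ∀ n, fibListX n <+: fibListX (n+1)
  | 0 => ⟨[1], rfl⟩
  | (n+1) => by
      rw [show fibListX (n+2) = fibListX (n+1) ++ fibListX n from rfl]
      exact List.prefix_append _ _

lemma fibListX_prefix_le {m n : ℕ} (h : m ≤ n) : fibListX m <+: fibListX n := by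
  induction n with
  | zero => rw [Nat.le_zero.mp h]
  | succ n ih =>
      rcases Nat.lt_or_ge m (n+1) with h1 | h1
      · exact (ih (by omega)).trans (fibListX_prefix n)
      · rw [show m = n+1 by omega]

lemma getD_of_prefix {l1 l2 : List ℕ} (h : l1 <+: l2) {n : ℕ} (hn : n < l1.length) :
    l1.getD n 0 = l2.getD n 0 := by
  have hn2 : n < l2.length := lt_of_lt_of_le hn h.length_le
  rw [List.getD_eq_getElem _ _ hn, List.getD_eq_getElem _ _ hn2]
  exact h.getElem hn

lemma lt_fib_add_two (n : ℕ) : n < Nat.fib (n+2) := by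
  induction n using Nat.twoStepInduction with
  | zero => norm_num
  | one => decide
  | more n ih1 ih2 =>
      have h := Nat.fib_add_two (n := n+2)
      rw [show n+2+1 = n+3 from rfl] at h
      have hi : n+1 < Nat.fib (n+3) := by
        have := ih2
        rw [show n+1+2 = n+3 from rfl] at this
        exact this
      have h2 : Nat.fib (n+2) ≥ 1 := Nat.fib_pos.mpr (by omega)
      omega

lemma fibWordX_eq_getD (m n : ℕ) (h : n < Nat.fib (m+2)) :
    fibWord n = (fibListX m).getD n 0 := by
  have h1 : fibWord n = (fibListX (n+2)).getD n 0 := by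
    have hee : fibList = fibListX := by
      funext k
      induction k using Nat.twoStepInduction with
      | zero => rfl
      | one => rfl
      | more k ih1 ih2 => rw [show fibList (k+2) = fibList (k+1) ++ fibList k from rfl,
          show fibListX (k+2) = fibListX (k+1) ++ fibListX k from rfl, ih1, ih2]
    rw [fibWord, hee]
  rw [h1]
  have hn : n < (fibListX (n+2)).length := by
    rw [fibListX_length]
    rw [show n+2+2 = n+4 from rfl]
    exact lt_of_lt_of_le (lt_fib_add_two n) (Nat.fib_mono (by omega))
  have hm : n < (fibListX m).length := by rw [fibListX_length]; exact h
  rcases Nat.le_total (n+2) m with hc | hc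
  · exact (getD_of_prefix (fibListX_prefix_le hc) hn)
  · exact (getD_of_prefix (fibListX_prefix_le hc) hm).symm

/-- Shift identity: `c (fib (k+3) + t) = c t` for `t < fib (k+2)`. -/
lemma fibWord_shift (k t : ℕ) (ht : t < Nat.fib (k+2)) :
    fibWord (Nat.fib (k+3) + t) = fibWord t := by
  have hlen1 : (fibListX (k+1)).length = Nat.fib (k+3) := fibListX_length (k+1)
  have hfib4 : Nat.fib (k+4) = Nat.fib (k+2) + Nat.fib (k+3) := by
    rw [show k+4 = (k+2)+2 from rfl, Nat.fib_add_two]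
  have h1 : fibWord (Nat.fib (k+3) + t) = (fibListX (k+2)).getD (Nat.fib (k+3) + t) 0 :=
    fibWordX_eq_getD (k+2) _ (by rw [show k+2+2 = k+4 from rfl]; omega)
  rw [h1, show fibListX (k+2) = fibListX (k+1) ++ fibListX k from rfl]
  rw [List.getD_append_right _ _ _ _ (by rw [hlen1]; omega)]
  rw [hlen1, show Nat.fib (k+3) + t - Nat.fib (k+3) = t from by omega]
  exact (fibWordX_eq_getD k t ht).symm

/-- Perturbing by a small ε does not change the floor. -/
lemma floor_perturb (x ε : ℝ) (h0 : |ε| < Int.fract x) (h1 : Int.fract x < 1 - |ε|) :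
    ⌊x + ε⌋ = ⌊x⌋ := by
  have hf : Int.fract x = x - ⌊x⌋ := rfl
  have habs1 : ε ≤ |ε| := le_abs_self ε
  have habs2 : -|ε| ≤ ε := neg_abs_le ε
  rw [Int.floor_eq_iff]
  constructor
  · linarith
  · push_cast; linarith

lemma exists_fib_between (n : ℕ) (hn : 5 ≤ n) :
    ∃ k : ℕ, 2 ≤ k ∧ Nat.fib (k+3) ≤ n ∧ n < Nat.fib (k+4) := by
  induction n with
  | zero => omega
  | succ n ih =>
      rcases Nat.lt_or_ge n 5 with h5 | h5
      · have hf5 : Nat.fib (2+3) = 5 := by decide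
        have hf6 : Nat.fib (2+4) = 8 := by decide
        exact ⟨2, le_refl _, by omega, by omega⟩
      · obtain ⟨k, hk2, hk3, hk4⟩ := ih h5
        rcases Nat.lt_or_ge (n+1) (Nat.fib (k+4)) with h | h
        · exact ⟨k, hk2, by omega, h⟩
        · refine ⟨k+1, by omega, by rw [show k+1+3 = k+4 from rfl]; omega, ?_⟩
          rw [show k+1+4 = (k+3)+2 from rfl, Nat.fib_add_two]
          have : 1 ≤ Nat.fib (k+3) := Nat.fib_pos.mpr (by omega)
          rw [show k+3+1 = k+4 from rfl]
          omega

/-- The Beatty formula for the Fibonacci word. -/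
lemma beatty : ∀ n : ℕ, (fibWord n : ℤ) = ⌊((n:ℝ)+2)*alph⌋ - ⌊((n:ℝ)+1)*alph⌋ := by
  intro n
  induction n using Nat.strong_induction_on with
  | _ n ih =>
    have hfl : ∀ (r : ℝ) (v : ℤ), (v:ℝ) ≤ r → r < v+1 → ⌊r⌋ = v :=
      fun r v h1 h2 => Int.floor_eq_iff.mpr ⟨h1, h2⟩
    rcases Nat.lt_or_ge n 5 with h5 | h5
    · -- base cases: n ∈ {0,1,2,3,4}
      have a1 : ⌊(1:ℝ)*alph⌋ = 0 := hfl _ _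
        (by unfold alph; push_cast; nlinarith [sqrt5_lt])
        (by unfold alph; push_cast; nlinarith [sqrt5_gt])
      have a2 : ⌊(2:ℝ)*alph⌋ = 0 := hfl _ _
        (by unfold alph; push_cast; nlinarith [sqrt5_lt])
        (by unfold alph; push_cast; nlinarith [sqrt5_gt])
      have a3 : ⌊(3:ℝ)*alph⌋ = 1 := hfl _ _
        (by unfold alph; push_cast; nlinarith [sqrt5_lt])
        (by unfold alph; push_cast; nlinarith [sqrt5_gt])
      have a4 : ⌊(4:ℝ)*alph⌋ = 1 := hfl _ _
        (by unfold alph; push_cast; nlinarith [sqrt5_lt])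
        (by unfold alph; push_cast; nlinarith [sqrt5_gt])
      have a5 : ⌊(5:ℝ)*alph⌋ = 1 := hfl _ _
        (by unfold alph; push_cast; nlinarith [sqrt5_lt])
        (by unfold alph; push_cast; nlinarith [sqrt5_gt])
      have a6 : ⌊(6:ℝ)*alph⌋ = 2 := hfl _ _
        (by unfold alph; push_cast; nlinarith [sqrt5_lt])
        (by unfold alph; push_cast; nlinarith [sqrt5_gt])
      have e0 : fibWord 0 = 0 := by decide
      have e1 : fibWord 1 = 1 := by decide
      have e2 : fibWord 2 = 0 := by decide
      have e3 : fibWord 3 = 0 := by decide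
      have e4 : fibWord 4 = 1 := by decide
      interval_cases n
      · rw [e0]; norm_num [a2]; exact ⟨alph_pos.le, alph_lt⟩
      · rw [e1]; norm_num [a2, a3]
      · rw [e2]; norm_num [a3, a4]
      · rw [e3]; norm_num [a4, a5]
      · rw [e4]; norm_num [a5, a6]
    · -- inductive step
      obtain ⟨k, hk2, hk3, hk4⟩ := exists_fib_between n h5
      set t : ℕ := n - Nat.fib (k+3) with htdef
      have hfib4 : Nat.fib (k+4) = Nat.fib (k+2) + Nat.fib (k+3) := by
        rw [show k+4 = (k+2)+2 from rfl, Nat.fib_add_two]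
      have htlt : t < Nat.fib (k+2) := by omega
      have hneq : n = Nat.fib (k+3) + t := by omega
      have hc : fibWord n = fibWord t := by rw [hneq]; exact fibWord_shift k t htlt
      have hfibpos : 0 < Nat.fib (k+3) := Nat.fib_pos.mpr (by omega)
      have hih := ih t (by omega)
      -- floor shift for m' = t+1 and t+2
      have hshift : ∀ m' : ℕ, 1 ≤ m' → m' ≤ Nat.fib (k+2) + 1 →
          ⌊((m':ℝ) + Nat.fib (k+3))*alph⌋ = ⌊(m':ℝ)*alph⌋ + (2*(Nat.fib (k+3):ℤ) - (Nat.fib (k+4):ℤ)) := by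
        intro m' h1 h2
        have hm'lt : m' < Nat.fib (k+3) := by
          have : Nat.fib (k+3) = Nat.fib (k+1) + Nat.fib (k+2) := by
            rw [show k+3 = (k+1)+2 from rfl, Nat.fib_add_two]
          have h4 : 2 ≤ Nat.fib (k+1) := by
            calc 2 = Nat.fib 3 := rfl
            _ ≤ Nat.fib (k+1) := Nat.fib_mono (by omega)
          omega
        have hfb := fract_bounds (j := k+2) h1 hm'lt
        have hfa := fib_alph (k+3)
        rw [show k+3+1 = k+4 from rfl] at hfa
        have hdec : ((m':ℝ) + Nat.fib (k+3))*alph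
            = ((m':ℝ)*alph + (-om)^(k+3)) + ((2*(Nat.fib (k+3):ℤ) - (Nat.fib (k+4):ℤ)):ℤ) := by
          push_cast
          linear_combination hfa
        rw [hdec, Int.floor_add_intCast]
        congr 1
        apply floor_perturb
        · rw [abs_neg_om_pow]
          calc om^(k+3) < om^(k+2) := om_pow_succ_lt _
          _ ≤ Int.fract ((m':ℝ)*alph) := hfb.1
        · rw [abs_neg_om_pow]
          have := hfb.2
          have := om_pow_succ_lt (k+2)
          linarith
      have e1 := hshift (t+1) (by omega) (by omega)
      have e2 := hshift (t+2) (by omega) (by omega)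
      rw [hc, hih]
      have r1 : ((n:ℝ)+2) = ((t:ℝ)+2) + Nat.fib (k+3) := by
        rw [hneq]; push_cast; ring
      have r2 : ((n:ℝ)+1) = ((t:ℝ)+1) + Nat.fib (k+3) := by
        rw [hneq]; push_cast; ring
      rw [r1, r2]
      have e1' : ⌊(((t:ℝ)+1) + Nat.fib (k+3))*alph⌋ = ⌊((t:ℝ)+1)*alph⌋ + (2*(Nat.fib (k+3):ℤ) - (Nat.fib (k+4):ℤ)) := by
        have := e1; push_cast at this ⊢; convert this using 3 <;> ring
      have e2' : ⌊(((t:ℝ)+2) + Nat.fib (k+3))*alph⌋ = ⌊((t:ℝ)+2)*alph⌋ + (2*(Nat.fib (k+3):ℤ) - (Nat.fib (k+4):ℤ)) := by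
        have := e2; push_cast at this ⊢; convert this using 3 <;> ring
      rw [e1', e2']
      ring

/-! ### Consequences of Beatty -/

/-- Beatty in ℕ-indexed form. -/
lemma beattyF (n : ℕ) :
    (fibWord n : ℤ) = ⌊(((n+2:ℕ)):ℝ)*alph⌋ - ⌊(((n+1:ℕ)):ℝ)*alph⌋ := by
  have := beatty n
  push_cast at this ⊢
  exact this

lemma fibWord_le_one (n : ℕ) : fibWord n ≤ 1 := by
  have hb := beattyF n
  have h1 : (((n+2:ℕ)):ℝ)*alph ≤ (((n+1:ℕ)):ℝ)*alph + 1 := by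
    push_cast; nlinarith [alph_lt, alph_pos]
  have h2 : ⌊(((n+2:ℕ)):ℝ)*alph⌋ ≤ ⌊(((n+1:ℕ)):ℝ)*alph⌋ + 1 := by
    calc ⌊(((n+2:ℕ)):ℝ)*alph⌋ ≤ ⌊(((n+1:ℕ)):ℝ)*alph + 1⌋ := Int.floor_le_floor h1
    _ = ⌊(((n+1:ℕ)):ℝ)*alph⌋ + 1 := by
        rw [show ((1:ℝ)) = ((1:ℤ):ℝ) from by norm_num, Int.floor_add_intCast]
  omega

lemma no11 (n : ℕ) (h1 : fibWord n = 1) (h2 : fibWord (n+1) = 1) : False := by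
  have hb1 := beattyF n
  have hb2 := beattyF (n+1)
  rw [show n+1+2 = n+3 from rfl, show n+1+1 = n+2 from rfl] at hb2
  have h3 : (((n+3:ℕ)):ℝ)*alph ≤ (((n+1:ℕ)):ℝ)*alph + 1 := by
    push_cast
    have : 2*alph < 1 := by unfold alph; nlinarith [sqrt5_gt]
    nlinarith [alph_pos]
  have h4 : ⌊(((n+3:ℕ)):ℝ)*alph⌋ ≤ ⌊(((n+1:ℕ)):ℝ)*alph⌋ + 1 := by
    calc ⌊(((n+3:ℕ)):ℝ)*alph⌋ ≤ ⌊(((n+1:ℕ)):ℝ)*alph + 1⌋ := Int.floor_le_floor h3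
    _ = ⌊(((n+1:ℕ)):ℝ)*alph⌋ + 1 := by
        rw [show ((1:ℝ)) = ((1:ℤ):ℝ) from by norm_num, Int.floor_add_intCast]
  rw [h1] at hb1; rw [h2] at hb2
  omega

lemma no000 (n : ℕ) (h1 : fibWord n = 0) (h2 : fibWord (n+1) = 0)
    (h3 : fibWord (n+2) = 0) : False := by
  have hb1 := beattyF n
  have hb2 := beattyF (n+1)
  have hb3 := beattyF (n+2)
  rw [show n+1+2 = n+3 from rfl, show n+1+1 = n+2 from rfl] at hb2
  rw [show n+2+2 = n+4 from rfl, show n+2+1 = n+3 from rfl] at hb3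
  have h5 : (((n+1:ℕ)):ℝ)*alph + 1 ≤ (((n+4:ℕ)):ℝ)*alph := by
    push_cast
    have : 1 < 3*alph := by unfold alph; nlinarith [sqrt5_lt]
    nlinarith [alph_pos]
  have h6 : ⌊(((n+1:ℕ)):ℝ)*alph⌋ + 1 ≤ ⌊(((n+4:ℕ)):ℝ)*alph⌋ := by
    calc ⌊(((n+1:ℕ)):ℝ)*alph⌋ + 1 = ⌊(((n+1:ℕ)):ℝ)*alph + 1⌋ := by
          rw [show ((1:ℝ)) = ((1:ℤ):ℝ) from by norm_num, Int.floor_add_intCast]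
    _ ≤ ⌊(((n+4:ℕ)):ℝ)*alph⌋ := Int.floor_le_floor h5
  rw [h1] at hb1; rw [h2] at hb2; rw [h3] at hb3
  omega

lemma countBelow_succ (x : ℕ → ℕ) (a n : ℕ) :
    countBelow x a (n+1) = countBelow x a n + (if x n = a then 1 else 0) := by
  unfold countBelow
  rw [Finset.range_add_one, Finset.filter_insert]
  split
  · rw [Finset.card_insert_of_notMem (by simp)]
  · simp

lemma count1 (n : ℕ) : (countBelow fibWord 1 n : ℤ) = ⌊(((n+1:ℕ)):ℝ)*alph⌋ := by
  induction n with
  | zero =>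
      have : ⌊(((0+1:ℕ)):ℝ)*alph⌋ = 0 := by
        rw [Int.floor_eq_iff]
        constructor
        · push_cast; nlinarith [alph_pos]
        · push_cast; nlinarith [alph_lt]
      rw [this]
      unfold countBelow
      simp
  | succ n ih =>
      rw [countBelow_succ]
      have hb := beattyF n
      have hle := fibWord_le_one n
      rw [show n+1+1 = n+2 from rfl]
      interval_cases h : fibWord n
      · simp only [if_neg (by omega : ¬ (0:ℕ) = 1), add_zero]
        push_cast at ih hb ⊢
        omega
      · simp only [if_pos rfl]
        push_cast at ih hb ⊢
        omega

lemma countsum (n : ℕ) : countBelow fibWord 0 n + countBelow fibWord 1 n = n := by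
  induction n with
  | zero => unfold countBelow; simp
  | succ n ih =>
      rw [countBelow_succ, countBelow_succ]
      have hle := fibWord_le_one n
      interval_cases h : fibWord n <;> simp [h] <;> omega

lemma count0 (n : ℕ) : (countBelow fibWord 0 n : ℤ) = n - ⌊(((n+1:ℕ)):ℝ)*alph⌋ := by
  have h1 := countsum n
  have h2 := count1 n
  omega

/-! ### x4 bridge lemmas -/

/-- Window 1-count. -/
noncomputable def Wc (p n : ℕ) : ℤ := ⌊(((n+p+1:ℕ)):ℝ)*alph⌋ - ⌊(((n+1:ℕ)):ℝ)*alph⌋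

lemma Wc_count (p n : ℕ) :
    Wc p n = (countBelow fibWord 1 (n+p) : ℤ) - (countBelow fibWord 1 n : ℤ) := by
  unfold Wc
  rw [count1, count1]

lemma Wc_count0 (p n : ℕ) :
    (p:ℤ) - Wc p n = (countBelow fibWord 0 (n+p) : ℤ) - (countBelow fibWord 0 n : ℤ) := by
  have := Wc_count p n
  have h1 := countsum (n+p)
  have h2 := countsum n
  omega

/-- Letters equal across p ↔ window count stable. -/
lemma Wc_step (p n : ℕ) (h : fibWord n = fibWord (n+p)) : Wc p (n+1) = Wc p n := by
  have hb1 := beattyF n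
  have hb2 := beattyF (n+p)
  rw [h] at hb1
  unfold Wc
  rw [show n+1+p+1 = n+p+2 from by omega, show n+1+1 = n+2 from rfl]
  rw [show n+p+2 = (n+p)+2 from by omega, show n+p+1 = (n+p)+1 from by omega] at *
  omega

lemma Wc_step' (p n : ℕ) (h : Wc p (n+1) = Wc p n) : fibWord n = fibWord (n+p) := by
  have hb1 := beattyF n
  have hb2 := beattyF (n+p)
  unfold Wc at h
  rw [show n+1+p+1 = (n+p)+2 from by omega, show n+1+1 = n+2 from rfl,
    show n+p+1 = (n+p)+1 from by omega] at h
  have hle1 := fibWord_le_one n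
  have hle2 := fibWord_le_one (n+p)
  omega

/-- Forward bridge: x4-match gives letter match and parity facts. -/
lemma x4_match_fwd (n p : ℕ) (h : x4 n = x4 (n+p)) :
    fibWord n = fibWord (n+p) ∧
    (fibWord n = 1 → (2:ℤ) ∣ Wc p n) ∧
    (fibWord n = 0 → (2:ℤ) ∣ ((p:ℤ) - Wc p n)) := by
  have hle1 := fibWord_le_one n
  have hle2 := fibWord_le_one (n+p)
  have hc1 := Wc_count p n
  have hc0 := Wc_count0 p n
  unfold x4 at h
  rcases Nat.eq_zero_or_pos (fibWord n) with h1 | h1 <;>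
    rcases Nat.eq_zero_or_pos (fibWord (n+p)) with h2 | h2
  · rw [if_pos h1, if_pos h2] at h
    refine ⟨by omega, by omega, ?_⟩
    intro _
    have := Nat.mod_two_eq_zero_or_one (countBelow fibWord 0 n)
    omega
  · rw [if_pos h1, if_neg (by omega)] at h
    exfalso
    have := Nat.mod_two_eq_zero_or_one (countBelow fibWord 0 n)
    omega
  · rw [if_neg (by omega), if_pos h2] at h
    exfalso
    have := Nat.mod_two_eq_zero_or_one (countBelow fibWord 0 (n+p))
    omega
  · rw [if_neg (by omega), if_neg (by omega)] at h
    refine ⟨by omega, ?_, by omega⟩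
    intro _
    omega

/-- Backward bridge. -/
lemma x4_match_bwd (n p : ℕ) (hc : fibWord n = fibWord (n+p))
    (h1 : fibWord n = 1 → (2:ℤ) ∣ Wc p n)
    (h0 : fibWord n = 0 → (2:ℤ) ∣ ((p:ℤ) - Wc p n)) :
    x4 n = x4 (n+p) := by
  have hle1 := fibWord_le_one n
  have hc1 := Wc_count p n
  have hc0 := Wc_count0 p n
  unfold x4
  rcases Nat.eq_zero_or_pos (fibWord n) with hz | hz
  · rw [if_pos hz, if_pos (by omega)]
    have := h0 hz
    omega
  · rw [if_neg (by omega), if_neg (by omega)]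
    have := h1 (by omega)
    omega

/-! ### Small period exclusions -/

lemma Wc_one (n : ℕ) : Wc 1 n = if fibWord n = 1 then 1 else 0 := by
  have h := Wc_count 1 n
  rw [countBelow_succ] at h
  split <;> rename_i hsp
  · rw [if_pos hsp] at h; push_cast at h; omega
  · rw [if_neg hsp] at h; push_cast at h; omega

lemma x4_ne_succ (n : ℕ) : x4 n ≠ x4 (n+1) := by
  intro h
  obtain ⟨hc, h1, h0⟩ := x4_match_fwd n 1 h
  have hW := Wc_one n
  have hle := fibWord_le_one n
  interval_cases hf : fibWord n
  · rw [if_neg (by omega)] at hW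
    have := h0 rfl
    omega
  · rw [if_pos rfl] at hW
    have := h1 rfl
    omega

lemma Wc_two (n : ℕ) :
    Wc 2 n = (if fibWord n = 1 then 1 else 0) + (if fibWord (n+1) = 1 then 1 else 0) := by
  have h := Wc_count 2 n
  rw [show n+2 = (n+1)+1 from rfl, countBelow_succ, countBelow_succ] at h
  split <;> rename_i h1 <;> split <;> rename_i h2 <;>
    simp only [if_pos, if_neg, h1, h2] at h ⊢ <;> push_cast at h <;> omega

lemma x4_ne_two (n : ℕ) : x4 n ≠ x4 (n+2) := by
  intro h
  obtain ⟨hc, h1, h0⟩ := x4_match_fwd n 2 h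
  have hW := Wc_two n
  have hle := fibWord_le_one n
  have hle1 := fibWord_le_one (n+1)
  interval_cases hf : fibWord n
  · -- letters n, n+2 are 0; parity forces n+1 letter 0; 000
    have hd := h0 rfl
    have hmid : fibWord (n+1) = 0 := by
      rcases Nat.eq_zero_or_pos (fibWord (n+1)) with h' | h'
      · exact h'
      · exfalso; rw [if_neg (by omega), if_pos (by omega)] at hW; omega
    have hc2 : fibWord (n+2) = 0 := by omega
    exact no000 n hf hmid hc2
  · have hd := h1 rfl
    have hmid : fibWord (n+1) = 1 := by
      rcases Nat.eq_zero_or_pos (fibWord (n+1)) with h' | h'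
      · exfalso; rw [if_pos rfl, if_neg (by omega)] at hW; omega
      · omega
    exact no11 n hf hmid

/-! ### Main upper bound lemma -/

lemma om_gt_half : (1:ℝ)/2 < om := by
  unfold om; nlinarith [sqrt5_gt]

lemma exists_fib_between' (P : ℕ) (hP : 1 ≤ P) :
    ∃ jj : ℕ, Nat.fib (jj+2) ≤ P ∧ P < Nat.fib (jj+3) := by
  induction P with
  | zero => omega
  | succ P ih =>
      rcases Nat.eq_zero_or_pos P with h0 | h0
      · exact ⟨0, by rw [h0]; decide, by rw [h0]; decide⟩
      · obtain ⟨jj, h1, h2⟩ := ih h0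
        rcases Nat.lt_or_ge (P+1) (Nat.fib (jj+3)) with h | h
        · exact ⟨jj, by omega, h⟩
        · refine ⟨jj+1, by rw [show jj+1+2 = jj+3 from rfl]; omega, ?_⟩
          rw [show jj+1+3 = (jj+2)+2 from rfl, Nat.fib_add_two]
          have hpos : 1 ≤ Nat.fib (jj+2) := Nat.fib_pos.mpr (by omega)
          rw [show jj+2+1 = jj+3 from rfl]
          omega

lemma upper_main (i p s : ℕ) (hp : 3 ≤ p) (hs : 3 ≤ s)
    (hm : ∀ n, i ≤ n → n < i + s → x4 n = x4 (n + p)) :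
    ∃ jj : ℕ, 2 * Nat.fib (jj+2) ≤ p ∧ s + 2 ≤ Nat.fib (jj+3) := by
  have hF : ∀ n, i ≤ n → n < i + s → fibWord n = fibWord (n+p) :=
    fun n a b => (x4_match_fwd n p (hm n a b)).1
  set V : ℤ := Wc p i with hV
  have hWconst : ∀ m, m ≤ s → Wc p (i+m) = V := by
    intro m
    induction m with
    | zero => intro _; rw [add_zero]
    | succ m ih =>
        intro hms
        have h1 : Wc p (i+m+1) = Wc p (i+m) := Wc_step p (i+m) (hF (i+m) (by omega) (by omega))
        rw [show i+(m+1) = i+m+1 from rfl, h1]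
        exact ih (by omega)
  -- parity of V and p
  have hle0 := fibWord_le_one i
  have hle1 := fibWord_le_one (i+1)
  have hle2 := fibWord_le_one (i+2)
  have hVpar : (2:ℤ) ∣ V := by
    -- find a 1 among i, i+1, i+2
    have h1 : fibWord i = 1 ∨ fibWord (i+1) = 1 ∨ fibWord (i+2) = 1 := by
      by_contra hcon
      push_neg at hcon
      exact no000 i (by omega) (by omega) (by omega)
    rcases h1 with h | h | h
    · have := ((x4_match_fwd i p (hm i (le_refl _) (by omega))).2.1) h
      rwa [← hWconst 0 (by omega), add_zero]
    · have := ((x4_match_fwd (i+1) p (hm (i+1) (by omega) (by omega))).2.1) h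
      rwa [← hWconst 1 (by omega)]
    · have := ((x4_match_fwd (i+2) p (hm (i+2) (by omega) (by omega))).2.1) h
      rwa [← hWconst 2 (by omega)]
  have hppar : (2:ℤ) ∣ ((p:ℤ) - V) := by
    have h1 : fibWord i = 0 ∨ fibWord (i+1) = 0 := by
      by_contra hcon
      push_neg at hcon
      exact no11 i (by omega) (by omega)
    rcases h1 with h | h
    · have := ((x4_match_fwd i p (hm i (le_refl _) (by omega))).2.2) h
      rwa [← hWconst 0 (by omega), add_zero]
    · have := ((x4_match_fwd (i+1) p (hm (i+1) (by omega) (by omega))).2.2) h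
      rwa [← hWconst 1 (by omega)]
  have hpeven : 2 ∣ p := by
    have : (2:ℤ) ∣ (p:ℤ) := by omega
    exact_mod_cast this
  obtain ⟨P, hPdef⟩ := hpeven
  have hP1 : 1 ≤ P := by omega
  obtain ⟨jj, hj1, hj2⟩ := exists_fib_between' P hP1
  obtain ⟨Wh, hWh⟩ := hVpar
  -- the real shift ξ
  set ξ : ℝ := (p:ℝ) * alph - (V:ℝ) with hξdef
  have happrox := approx (jj+2) P Wh hP1 (by rw [show jj+2+1 = jj+3 from rfl]; exact hj2)
  have hξlow : 2 * om^(jj+2) ≤ |ξ| := by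
    have h2 : ξ = 2 * ((P:ℝ) * alph - (Wh:ℝ)) := by
      rw [hξdef, hWh, hPdef]; push_cast; ring
    rw [h2, abs_mul, abs_two]
    nlinarith [happrox]
  have hξgt : om^(jj+1) < |ξ| := by
    have h3 : om^(jj+1) < 2 * om^(jj+2) := by
      have h4 : om^(jj+2) = om^(jj+1) * om := by ring
      nlinarith [om_gt_half, om_pow_pos (jj+1)]
    linarith
  -- |ξ| < 1
  have hVfloor : V = ⌊(((i+p+1:ℕ)):ℝ)*alph⌋ - ⌊(((i+1:ℕ)):ℝ)*alph⌋ := hV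
  have hsplit : (((i+p+1:ℕ)):ℝ)*alph = (((i+1:ℕ)):ℝ)*alph + (p:ℝ)*alph := by
    push_cast; ring
  have hξlt1 : |ξ| < 1 := by
    have f1 := Int.floor_le ((((i+p+1:ℕ)):ℝ)*alph)
    have f2 := Int.sub_one_lt_floor ((((i+p+1:ℕ)):ℝ)*alph)
    have f3 := Int.floor_le ((((i+1:ℕ)):ℝ)*alph)
    have f4 := Int.sub_one_lt_floor ((((i+1:ℕ)):ℝ)*alph)
    rw [abs_lt]
    constructor <;> [skip; skip] <;>
      (rw [hξdef, hVfloor]; push_cast at hsplit ⊢; push_cast at f1 f2 f3 f4; nlinarith)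
  -- avoidance
  have hav : ∀ n, i ≤ n → n ≤ i + s →
      0 ≤ Int.fract ((((n+1:ℕ)):ℝ)*alph) + ξ ∧ Int.fract ((((n+1:ℕ)):ℝ)*alph) + ξ < 1 := by
    intro n hn1 hn2
    have hWn : Wc p n = V := by
      have := hWconst (n - i) (by omega)
      rwa [show i + (n-i) = n from by omega] at this
    have hfl : ⌊(((n+p+1:ℕ)):ℝ)*alph⌋ = ⌊(((n+1:ℕ)):ℝ)*alph⌋ + V := by
      have : Wc p n = V := hWn
      unfold Wc at this
      omega
    have hsp : (((n+p+1:ℕ)):ℝ)*alph = (((n+1:ℕ)):ℝ)*alph + ((p:ℝ)*alph) := by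
      push_cast; ring
    have g1 := Int.floor_le ((((n+p+1:ℕ)):ℝ)*alph)
    have g2 := Int.sub_one_lt_floor ((((n+p+1:ℕ)):ℝ)*alph)
    have hfr : Int.fract ((((n+1:ℕ)):ℝ)*alph)
        = (((n+1:ℕ)):ℝ)*alph - ⌊(((n+1:ℕ)):ℝ)*alph⌋ := rfl
    rw [hfl] at g1 g2
    rw [hsp] at g1 g2
    push_cast at g1 g2
    constructor
    · rw [hfr, hξdef]; push_cast; linarith
    · rw [hfr, hξdef]; push_cast; linarith
  -- conclude
  refine ⟨jj, by omega, ?_⟩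
  by_contra hcon
  push_neg at hcon
  have hss : Nat.fib (jj+3) ≤ s + 1 := by omega
  rcases le_or_gt 0 ξ with hsign | hsign
  · obtain ⟨d, hd, hhit⟩ := hit_top (jj+1) (i+1) ξ
      (by rwa [abs_of_nonneg hsign] at hξgt) (by rw [abs_of_nonneg hsign] at hξlt1; exact hξlt1)
    rw [show jj+1+2 = jj+3 from rfl] at hd
    have := (hav (i+d) (by omega) (by omega)).2
    rw [show i+d+1 = i+1+d from by omega] at this
    linarith
  · obtain ⟨d, hd, hhit⟩ := hit_bot (jj+1) (i+1) (-ξ)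
      (by rwa [abs_of_neg hsign] at hξgt) (by rw [abs_of_neg hsign] at hξlt1; exact hξlt1)
    rw [show jj+1+2 = jj+3 from rfl] at hd
    have := (hav (i+d) (by omega) (by omega)).1
    rw [show i+d+1 = i+1+d from by omega] at this
    linarith

/-! ### One-sided bounds and the lower-bound family -/

lemma om_pair (m : ℕ) : om^(m+1) + om^(m+2) = om^m := by
  have h1 : om^(m+1) = om^m * om := by ring
  have h2 : om^(m+2) = om^m * om^2 := by ring
  rw [h1, h2, om_sq]; ring

lemma alph_eq_one_sub_om : alph = 1 - om := by
  unfold alph om; ring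

/-- One-sided bound: for `1 ≤ k < fib (2t+3)`, `fract (k α) ≤ 1 - om^(2t+1)`. -/
lemma oss : ∀ (t : ℕ) (k : ℕ), 1 ≤ k → k < Nat.fib (2*t+3) →
    Int.fract ((k:ℝ)*alph) ≤ 1 - om^(2*t+1) := by
  intro t
  induction t with
  | zero =>
      intro k h1 h2
      have hf3 : Nat.fib (2*0+3) = 2 := by decide
      have hk : k = 1 := by omega
      subst hk
      rw [show (((1:ℕ)):ℝ)*alph = alph from by norm_num]
      rw [Int.fract_eq_self.mpr ⟨alph_pos.le, alph_lt⟩, alph_eq_one_sub_om,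
        show 2*0+1 = 1 from by norm_num, pow_one]
  | succ t ih =>
      intro k h1 h2
      rw [show 2*(t+1)+3 = (2*t+3)+2 from by omega, Nat.fib_add_two,
        show 2*t+3+1 = 2*t+4 from by omega] at h2
      rw [show 2*(t+1)+1 = 2*t+3 from by omega]
      rcases Nat.lt_or_ge k (Nat.fib (2*t+3)) with hc1 | hc1
      · calc Int.fract ((k:ℝ)*alph) ≤ 1 - om^(2*t+1) := ih k h1 hc1
        _ ≤ 1 - om^(2*t+3) := by
            have := om_pow_mono (a := 2*t+1) (b := 2*t+3) (by omega)
            linarith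
      · rcases Nat.lt_or_ge k (Nat.fib (2*t+4)) with hc2 | hc2
        · -- k = fib (2t+3) + k', k' < fib (2t+2)
          set k' : ℕ := k - Nat.fib (2*t+3) with hk'
          have hkeq : k = Nat.fib (2*t+3) + k' := by omega
          have hlt : k' < Nat.fib (2*t+2) := by
            have h4 : Nat.fib (2*t+4) = Nat.fib (2*t+2) + Nat.fib (2*t+3) := by
              rw [show 2*t+4 = (2*t+2)+2 from by omega, Nat.fib_add_two]
            omega
          have hfa := fib_alph (2*t+3)
          rw [show 2*t+3+1 = 2*t+4 from by omega] at hfa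
          have hodd : ((-om):ℝ)^(2*t+3) = -om^(2*t+3) := by
            have : Odd (2*t+3) := ⟨t+1, by omega⟩
            exact this.neg_pow om
          rw [hodd] at hfa
          rcases Nat.eq_zero_or_pos k' with h0 | h0
          · -- k = fib (2t+3)
            have hfr : Int.fract ((k:ℝ)*alph) = 1 - om^(2*t+3) := by
              apply fract_of_eq _ _ ((2*(Nat.fib (2*t+3)):ℤ) - (Nat.fib (2*t+4):ℤ) - 1)
              · rw [hkeq, h0, add_zero]; push_cast; linarith [hfa]
              · have := om_pow_le_one (2*t+3); linarith [om_pow_pos (2*t+3)]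
              · linarith [om_pow_pos (2*t+3)]
            rw [hfr]
          · have hfb := fract_bounds (j := 2*t+1) h0 (by rwa [show 2*t+1+1 = 2*t+2 from by omega])
            have hfr : Int.fract ((k:ℝ)*alph)
                = Int.fract ((k':ℝ)*alph) - om^(2*t+3) := by
              apply fract_of_eq _ _ (⌊(k':ℝ)*alph⌋ + (2*(Nat.fib (2*t+3)):ℤ) - (Nat.fib (2*t+4):ℤ))
              · rw [hkeq]
                have hfr' : Int.fract ((k':ℝ)*alph) = (k':ℝ)*alph - ⌊(k':ℝ)*alph⌋ := rfl
                push_cast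
                rw [hfr']
                linarith [hfa]
              · have h5 : om^(2*t+3) ≤ om^(2*t+1) := om_pow_mono (by omega)
                linarith [hfb.1]
              · linarith [Int.fract_lt_one ((k':ℝ)*alph), om_pow_pos (2*t+3)]
            rw [hfr]
            linarith [Int.fract_lt_one ((k':ℝ)*alph)]
        · -- k = fib (2t+4) + k', k' < fib (2t+3)
          set k' : ℕ := k - Nat.fib (2*t+4) with hk'
          have hkeq : k = Nat.fib (2*t+4) + k' := by omega
          have hlt : k' < Nat.fib (2*t+3) := by omega
          have hfa := fib_alph (2*t+4)
          rw [show 2*t+4+1 = 2*t+5 from by omega] at hfa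
          have heven : ((-om):ℝ)^(2*t+4) = om^(2*t+4) := by
            have : Even (2*t+4) := ⟨t+2, by omega⟩
            exact this.neg_pow om
          rw [heven] at hfa
          rcases Nat.eq_zero_or_pos k' with h0 | h0
          · have hfr : Int.fract ((k:ℝ)*alph) = om^(2*t+4) := by
              apply fract_of_eq _ _ ((2*(Nat.fib (2*t+4)):ℤ) - (Nat.fib (2*t+5):ℤ))
              · rw [hkeq, h0, add_zero]; push_cast; linarith [hfa]
              · exact (om_pow_pos _).le
              · calc om^(2*t+4) ≤ om^1 := om_pow_mono (by omega)
                  _ < 1 := by rw [pow_one]; exact om_lt_one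
            rw [hfr]
            have h7 : om^(2*t+3) + om^(2*t+4) ≤ 1 := by
              have := om_pair (2*t+2)
              have h8 : om^(2*t+2) ≤ 1 := om_pow_le_one _
              rw [show 2*t+2+1 = 2*t+3 from by omega, show 2*t+2+2 = 2*t+4 from by omega] at this
              linarith
            linarith
          · have hih := ih k' h0 hlt
            have hfr : Int.fract ((k:ℝ)*alph)
                = Int.fract ((k':ℝ)*alph) + om^(2*t+4) := by
              apply fract_of_eq _ _ (⌊(k':ℝ)*alph⌋ + (2*(Nat.fib (2*t+4)):ℤ) - (Nat.fib (2*t+5):ℤ))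
              · rw [hkeq]
                have hfr' : Int.fract ((k':ℝ)*alph) = (k':ℝ)*alph - ⌊(k':ℝ)*alph⌋ := rfl
                push_cast
                rw [hfr']
                linarith [hfa]
              · have := Int.fract_nonneg ((k':ℝ)*alph)
                linarith [om_pow_pos (2*t+4)]
              · have hs1 := om_pow_succ_lt (2*t+1)
                have hs2 : om^(2*t+4) ≤ om^(2*t+2) := om_pow_mono (by omega)
                linarith
            rw [hfr]
            have h11 : om^(2*t+3) + om^(2*t+4) = om^(2*t+2) := by
              have := om_pair (2*t+2)
              rw [show 2*t+2+1 = 2*t+3 from by omega, show 2*t+2+2 = 2*t+4 from by omega] at this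
              linarith
            have h12 : om^(2*t+2) ≤ om^(2*t+1) := om_pow_mono (by omega)
            linarith

/-- The run of x4-matches for the lower bound family. -/
lemma lower_run (t : ℕ) :
    ∀ n, Nat.fib (2*t+3) ≤ n → n + 2 < 2 * Nat.fib (2*t+3) →
    x4 n = x4 (n + 2 * Nat.fib (2*t+2)) := by
  set j : ℕ := 2*t+2 with hj
  set p : ℕ := 2 * Nat.fib j with hpd
  set i : ℕ := Nat.fib (j+1) with hid
  -- First: Wc p m = V for all m ∈ [i, 2i-2]
  set V : ℤ := 2*(2*(Nat.fib j:ℤ) - (Nat.fib (j+1):ℤ)) with hVd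
  have hfaj := fib_alph j
  have hevenj : ((-om):ℝ)^j = om^j := by
    have : Even j := ⟨t+1, by omega⟩
    exact this.neg_pow om
  rw [hevenj] at hfaj
  have hξ : (p:ℝ) * alph = (V:ℝ) + 2*om^j := by
    rw [hpd, hVd]; push_cast; linarith [hfaj]
  have hWV : ∀ m, i ≤ m → m ≤ 2*i - 2 → Wc p m = V := by
    intro m hm1 hm2
    have hi2 : 2 ≤ i := by
      rw [hid]
      calc 2 = Nat.fib 3 := by decide
      _ ≤ Nat.fib (j+1) := Nat.fib_mono (by omega)
    set k : ℕ := m + 1 - i with hkd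
    have hk1 : 1 ≤ k := by omega
    have hk2 : k < Nat.fib (j+1) := by omega
    have hkeq : m + 1 = Nat.fib (j+1) + k := by omega
    -- fract ((m+1) α) = fract (k α) - om^(j+1)
    have hfb := fract_bounds (j := j) hk1 hk2
    have hfa1 := fib_alph (j+1)
    have hodd : ((-om):ℝ)^(j+1) = -om^(j+1) := by
      have : Odd (j+1) := ⟨t+1, by omega⟩
      exact this.neg_pow om
    rw [hodd] at hfa1
    have hfr : Int.fract ((((m+1:ℕ)):ℝ)*alph) = Int.fract ((k:ℝ)*alph) - om^(j+1) := by
      apply fract_of_eq _ _ (⌊(k:ℝ)*alph⌋ + (2*(Nat.fib (j+1)):ℤ) - (Nat.fib (j+2):ℤ))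
      · rw [hkeq]
        have hfr' : Int.fract ((k:ℝ)*alph) = (k:ℝ)*alph - ⌊(k:ℝ)*alph⌋ := rfl
        push_cast
        rw [hfr']
        linarith [hfa1]
      · have h5 : om^(j+1) ≤ om^j := om_pow_mono (by omega)
        linarith [hfb.1, om_pow_succ_lt j]
      · linarith [Int.fract_lt_one ((k:ℝ)*alph), om_pow_pos (j+1)]
    -- oss bound
    have hossb : Int.fract ((k:ℝ)*alph) ≤ 1 - om^(2*t+1) := oss t k hk1 (by rwa [show 2*t+3 = j+1 from by omega])
    -- fract((m+1)α) + 2 om^j < 1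
    have hkey : Int.fract ((((m+1:ℕ)):ℝ)*alph) + 2*om^j < 1 := by
      rw [hfr]
      have e1 : om^j = om^(2*t+1) * om := by rw [hj]; ring
      have e2 : om^(j+1) = om^(2*t+1) * om^2 := by rw [hj]; ring
      have hp21 := om_pow_pos (2*t+1)
      have hsq : 0 < (1 - om)^2 := by nlinarith [om_lt_one]
      have hmul := mul_pos hp21 hsq
      have hexp : om^(2*t+1)*(1-om)^2
          = om^(2*t+1) - 2*(om^(2*t+1)*om) + om^(2*t+1)*om^2 := by ring
      linarith [hossb, hmul, hexp ▸ hmul]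
    -- conclude the floor identity
    unfold Wc
    have hsp : (((m+p+1:ℕ)):ℝ)*alph = (((m+1:ℕ)):ℝ)*alph + ((V:ℝ) + 2*om^j) := by
      rw [← hξ]; push_cast; ring
    have hfl : ⌊(((m+p+1:ℕ)):ℝ)*alph⌋ = ⌊(((m+1:ℕ)):ℝ)*alph⌋ + V := by
      rw [hsp]
      rw [show (((m+1:ℕ)):ℝ)*alph + ((V:ℝ) + 2*om^j) = ((((m+1:ℕ)):ℝ)*alph + 2*om^j) + (V:ℤ) from by push_cast; ring]
      rw [Int.floor_add_intCast]
      congr 1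
      rw [Int.floor_eq_iff]
      have hfr2 : Int.fract ((((m+1:ℕ)):ℝ)*alph) = (((m+1:ℕ)):ℝ)*alph - ⌊(((m+1:ℕ)):ℝ)*alph⌋ := rfl
      rw [hfr2] at hkey
      constructor
      · have := Int.floor_le ((((m+1:ℕ)):ℝ)*alph)
        linarith [om_pow_pos j]
      · push_cast at hkey ⊢
        linarith [hkey]
    omega
  -- now the matches
  intro n hn1 hn2
  have hWn : Wc p n = V := hWV n hn1 (by omega)
  have hWn1 : Wc p (n+1) = V := hWV (n+1) (by omega) (by omega)
  apply x4_match_bwd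
  · exact Wc_step' p n (by rw [hWn, hWn1])
  · intro _
    rw [hWn, hVd]
    exact ⟨_, rfl⟩
  · intro _
    rw [hWn, hVd, hpd]
    push_cast
    exact ⟨(Nat.fib (j+1) : ℤ) - (Nat.fib j:ℤ), by push_cast; ring⟩

/-! ### Final assembly -/

lemma occursAt_get (u : List ℕ) (i : ℕ) (ho : OccursAt u x4 i) (t : ℕ) (ht : t < u.length) :
    u[t]? = some (x4 (i+t)) := by
  conv_lhs => rw [ho]
  rw [List.getElem?_map, List.getElem?_range ht]
  rfl

lemma occursAt_matches (u : List ℕ) (i p : ℕ) (ho : OccursAt u x4 i) (hper : hasPeriod u p) :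
    ∀ t, t + p < u.length → x4 (i+t) = x4 (i+t+p) := by
  intro t ht
  have h1 := hper.2 t ht
  rw [occursAt_get u i ho t (by omega), occursAt_get u i ho (t+p) ht] at h1
  rw [show i + (t+p) = i + t + p from by omega] at h1
  exact Option.some.inj h1

lemma critC_ge_five_thirds : (5:ℝ)/3 ≤ 1 + ((1 + Real.sqrt 5) / 2) / 2 := by
  nlinarith [sqrt5_gt]

lemma critC_ge_one : (1:ℝ) ≤ 1 + ((1 + Real.sqrt 5) / 2) / 2 := by
  nlinarith [Real.sqrt_nonneg 5]

lemma phi_fib (k : ℕ) :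
    ((1 + Real.sqrt 5)/2) * (Nat.fib k : ℝ) = (Nat.fib (k+1) : ℝ) - (-om)^k := by
  have h := fib_alph k
  have hφ : (1 + Real.sqrt 5)/2 = 2 - alph := by unfold alph; ring
  rw [hφ]
  linarith [h]

/-- Every exponent is at most the critical value. -/
lemma exp_le (u : List ℕ) (p : ℕ) (hf : IsFactorI u x4) (hne : u ≠ []) (hper : hasPeriod u p) :
    (u.length : ℝ) / p ≤ 1 + ((1 + Real.sqrt 5) / 2) / 2 := by
  obtain ⟨i, ho⟩ := hf
  have hp0 : 0 < p := hper.1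
  have hp0R : (0:ℝ) < p := by exact_mod_cast hp0
  have hmatch := occursAt_matches u i p ho hper
  rcases le_or_gt u.length p with hle | hlt
  · have h1 : (u.length : ℝ) / p ≤ 1 := by
      rw [div_le_one hp0R]; exact_mod_cast hle
    linarith [critC_ge_one]
  · set s : ℕ := u.length - p with hs
    have hs1 : 1 ≤ s := by omega
    have hlen : u.length = p + s := by omega
    have hmm : ∀ n, i ≤ n → n < i + s → x4 n = x4 (n+p) := by
      intro n h1 h2
      have := hmatch (n - i) (by omega)
      rw [show i + (n-i) = n from by omega] at this
      exact this
    match p, hp0 with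
    | 1, _ => exact absurd (hmm i (le_refl _) (by omega)) (x4_ne_succ i)
    | 2, _ => exact absurd (hmm i (le_refl _) (by omega)) (x4_ne_two i)
    | (q+3), _ =>
      set p : ℕ := q + 3 with hpq
      have hp3 : 3 ≤ p := by omega
      rcases le_or_gt s 2 with hs2 | hs3
      · have h53 : (u.length : ℝ) / p ≤ 5/3 := by
          rw [div_le_div_iff₀ hp0R (by norm_num)]
          have e1 : (u.length:ℝ) = (p:ℝ) + (s:ℝ) := by rw [hlen]; push_cast; ring
          have e2 : (s:ℝ) ≤ 2 := by exact_mod_cast hs2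
          have e3 : (3:ℝ) ≤ (p:ℝ) := by exact_mod_cast hp3
          nlinarith
        linarith [critC_ge_five_thirds]
      · obtain ⟨jj, hA, hB⟩ := upper_main i p s hp3 hs3 hmm
        have hFpos : (0:ℝ) < (Nat.fib (jj+2) : ℝ) := by
          exact_mod_cast Nat.fib_pos.mpr (by omega)
        have hid := phi_fib (jj+2)
        rw [show jj+2+1 = jj+3 from rfl] at hid
        have habs2 : |(-om)^(jj+2)| ≤ 1 := by
          rw [abs_neg_om_pow]; exact om_pow_le_one _
        obtain ⟨habsl, habsu⟩ := abs_le.mp habs2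
        have e1 : (u.length:ℝ) = (p:ℝ) + (s:ℝ) := by rw [hlen]; push_cast; ring
        have e2 : (s:ℝ) + 2 ≤ (Nat.fib (jj+3) : ℝ) := by exact_mod_cast hB
        have e3 : 2*(Nat.fib (jj+2) : ℝ) ≤ (p:ℝ) := by exact_mod_cast hA
        rw [div_le_iff₀ hp0R]
        have hsqrt_pos : (0:ℝ) < 1 + Real.sqrt 5 := by nlinarith [sqrt5_gt]
        have key : 4 * (s:ℝ) ≤ (1 + Real.sqrt 5) * p := by
          have k1 : (1 + Real.sqrt 5) * (2*(Nat.fib (jj+2):ℝ)) ≤ (1 + Real.sqrt 5) * p :=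
            mul_le_mul_of_nonneg_left e3 hsqrt_pos.le
          have k2 : (1 + Real.sqrt 5) * (2*(Nat.fib (jj+2):ℝ))
              = 4*(((1 + Real.sqrt 5)/2)*(Nat.fib (jj+2):ℝ)) := by ring
          linarith [k1, k2 ▸ k1, hid, habsu, e2]
        nlinarith [key, e1]

/-- Members of the exponent set from the lower-bound family. -/
lemma lower_member (t : ℕ) :
    ((2 * Nat.fib (2*t+2) + Nat.fib (2*t+3) - 2 : ℕ) : ℝ) / ((2 * Nat.fib (2*t+2) : ℕ) : ℝ)
      ∈ expSet x4 := by
  have hi2 : 2 ≤ Nat.fib (2*t+3) := by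
    calc 2 = Nat.fib 3 := by decide
    _ ≤ Nat.fib (2*t+3) := Nat.fib_mono (by omega)
  have hFj : 1 ≤ Nat.fib (2*t+2) := Nat.fib_pos.mpr (by omega)
  have hfibs : Nat.fib (2*t+3) ≤ 2 * Nat.fib (2*t+2) := by
    have h1 : Nat.fib (2*t+3) = Nat.fib (2*t+1) + Nat.fib (2*t+2) := by
      rw [show 2*t+3 = (2*t+1)+2 from by omega, Nat.fib_add_two]
    have h2 : Nat.fib (2*t+1) ≤ Nat.fib (2*t+2) := Nat.fib_mono (by omega)
    omega
  set L : ℕ := 2 * Nat.fib (2*t+2) + Nat.fib (2*t+3) - 2 with hLd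
  set P : ℕ := 2 * Nat.fib (2*t+2) with hPd
  set I : ℕ := Nat.fib (2*t+3) with hId
  have hmm : ∀ t', t' + P < L → x4 (I + t') = x4 (I + t' + P) := by
    intro t' ht'
    exact lower_run t (I + t') (by omega) (by omega)
  have hocc : OccursAt ((List.range L).map (fun t' => x4 (I + t'))) x4 I := by
    unfold OccursAt
    rw [List.length_map, List.length_range]
  refine ⟨(List.range L).map (fun t' => x4 (I + t')), P, ⟨I, hocc⟩, ?_, ⟨by omega, ?_⟩, ?_⟩
  · intro hcon
    have h3 : ((List.range L).map (fun t' => x4 (I + t'))).length = L := by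
      rw [List.length_map, List.length_range]
    rw [hcon] at h3
    simp at h3
    omega
  · intro t' ht'
    have hlen : ((List.range L).map (fun t' => x4 (I + t'))).length = L := by
      rw [List.length_map, List.length_range]
    rw [hlen] at ht'
    rw [occursAt_get _ I hocc t' (by omega), occursAt_get _ I hocc (t'+P) (by omega)]
    rw [show I + (t'+P) = I + t' + P from by omega]
    rw [hmm t' ht']
  · rw [List.length_map, List.length_range]

/-- The key theorem. -/
theorem critical_exponent_x4' :
    sSup (expSet x4) = 1 + ((1 + Real.sqrt 5) / 2) / 2 := by
  apply csSup_eq_of_forall_le_of_forall_lt_exists_gt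
  · exact ⟨_, lower_member 0⟩
  · rintro a ⟨u, p, hf, hne, hper, he⟩
    rw [he]
    exact exp_le u p hf hne hper
  · intro w hw
    set c : ℝ := 1 + ((1 + Real.sqrt 5) / 2) / 2 with hc
    obtain ⟨M, hM⟩ := exists_nat_gt (1/(c - w))
    refine ⟨_, lower_member M, ?_⟩
    have hFpos : (0:ℝ) < (Nat.fib (2*M+2) : ℝ) := by
      exact_mod_cast Nat.fib_pos.mpr (by omega)
    have hMF : (M:ℝ) < (Nat.fib (2*M+2) : ℝ) := by
      have h1 : 2*M < Nat.fib (2*M+2) := lt_fib_add_two (2*M)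
      exact_mod_cast (by omega : M < Nat.fib (2*M+2))
    have hcw : 0 < c - w := by linarith
    have hrecip : 1/(Nat.fib (2*M+2):ℝ) < c - w := by
      have h3 : 1/(c-w) < (Nat.fib (2*M+2):ℝ) := by linarith
      rw [div_lt_iff₀ hcw] at h3
      rw [div_lt_iff₀ hFpos]
      nlinarith [h3]
    have h2 : 2 ≤ Nat.fib (2*M+3) := by
      calc 2 = Nat.fib 3 := by decide
      _ ≤ Nat.fib (2*M+3) := Nat.fib_mono (by omega)
    have hcast : ((2 * Nat.fib (2*M+2) + Nat.fib (2*M+3) - 2 : ℕ) : ℝ)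
        = 2*(Nat.fib (2*M+2):ℝ) + (Nat.fib (2*M+3):ℝ) - 2 := by
      have h3 : 2 ≤ 2 * Nat.fib (2*M+2) + Nat.fib (2*M+3) := by omega
      rw [Nat.cast_sub h3]
      push_cast
      ring
    have hpcast : ((2 * Nat.fib (2*M+2) : ℕ) : ℝ) = 2*(Nat.fib (2*M+2):ℝ) := by
      push_cast; ring
    rw [hcast, hpcast]
    rw [lt_div_iff₀ (by linarith : (0:ℝ) < 2*(Nat.fib (2*M+2):ℝ))]
    have hevenj : ((-om):ℝ)^(2*M+2) = om^(2*M+2) := by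
      have : Even (2*M+2) := ⟨M+1, by omega⟩
      exact this.neg_pow om
    have hid := phi_fib (2*M+2)
    rw [hevenj, show 2*M+2+1 = 2*M+3 from rfl] at hid
    have hom1 : om^(2*M+2) ≤ 1 := om_pow_le_one _
    have hompos : 0 < om^(2*M+2) := om_pow_pos _
    -- w * 2F < 2F + F' - 2
    have hwc : w < c - 1/(Nat.fib (2*M+2):ℝ) := by linarith
    have hkey : (c - 1/(Nat.fib (2*M+2):ℝ)) * (2*(Nat.fib (2*M+2):ℝ))
        = c * (2*(Nat.fib (2*M+2):ℝ)) - 2 := by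
      field_simp
    have hc2F : c * (2*(Nat.fib (2*M+2):ℝ))
        = 2*(Nat.fib (2*M+2):ℝ) + (Nat.fib (2*M+3):ℝ) - om^(2*M+2) := by
      rw [hc]
      nlinarith [hid]
    have hmono := mul_lt_mul_of_pos_right hwc (by linarith : (0:ℝ) < 2*(Nat.fib (2*M+2):ℝ))
    nlinarith [hmono, hkey, hc2F, hompos]

theorem critical_exponent_x4 :
    sSup (expSet x4) = 1 + ((1 + Real.sqrt 5) / 2) / 2 :=
  critical_exponent_x4'
end
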